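/- arXiv:2206.12087 — 2 statements merged into one kernel-verified Lean document; each statement's English description precedes it below -/
import Mathlib

section
/- For all n ≥ 1 and k ≥ 1, the number of partial zigzag knight's paths of length 2n−1 that end at height k with their last step being an up-step (i.e., a step (1,2) or (2,1)) equals ((2k−1)/(n+k))·binom(2n, n−k+1). -/
open List

/-- The four right-moves of a knight. -/
def KnightSteps : Set (ℤ × ℤ) := {(2,1), (2,-1), (1,2), (1,-2)}

/-- All partial sums of the y-coordinates are nonnegative (the path stays in ℕ²). -/
def NonnegHeights (p : List (ℤ × ℤ)) : Prop :=
  ∀ i, 0 ≤ ((p.take i).map Prod.snd).sum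

/-- A partial knight's path: steps from `KnightSteps`, never going below the x-axis. -/
def IsPartialKnight (p : List (ℤ × ℤ)) : Prop :=
  (∀ s ∈ p, s ∈ KnightSteps) ∧ NonnegHeights p

/-- Any two consecutive steps have vertical components of opposite sign. -/
def IsZigzag (p : List (ℤ × ℤ)) : Prop :=
  List.Chain' (fun a b => a.2 * b.2 < 0) p

/-- A partial zigzag knight's path. -/
def IsPartialZigzag (p : List (ℤ × ℤ)) : Prop :=
  IsPartialKnight p ∧ IsZigzag p

/-- The height of the endpoint of a path. -/
def pathHeight (p : List (ℤ × ℤ)) : ℤ := (p.map Prod.snd).sum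

/-- The size (x-coordinate of the endpoint) of a path. -/
def pathSize (p : List (ℤ × ℤ)) : ℤ := (p.map Prod.fst).sum

/-- A zigzag knight's path ending on the x-axis. -/
def IsZigzagKnightPath (p : List (ℤ × ℤ)) : Prop :=
  IsPartialZigzag p ∧ pathHeight p = 0

/-- The last step of `p` exists and is an up-step. -/
def EndsWithUp (p : List (ℤ × ℤ)) : Prop :=
  ∃ s, p.getLast? = some s ∧ 0 < s.2

/-- The last step of `p` exists and is a down-step. -/
def EndsWithDown (p : List (ℤ × ℤ)) : Prop :=
  ∃ s, p.getLast? = some s ∧ s.2 < 0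

def Estep : ℤ × ℤ := (2, 1)
def Ebar  : ℤ × ℤ := (2, -1)
def Nstep : ℤ × ℤ := (1, 2)
def Nbar  : ℤ × ℤ := (1, -2)

/-- `ichoose m j` is `choose m j` for `j ≥ 0` and `0` for negative `j`. -/
def ichoose (m : ℕ) (j : ℤ) : ℕ := if 0 ≤ j then m.choose j.toNat else 0

lemma ichoose_neg {m : ℕ} {j : ℤ} (h : j < 0) : ichoose m j = 0 := by
  simp [ichoose, not_le.2 h]

lemma ichoose_of_gt {m : ℕ} {j : ℤ} (h : (m : ℤ) < j) : ichoose m j = 0 := by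
  have h0 : 0 ≤ j := le_trans (Int.natCast_nonneg m) h.le
  simp only [ichoose, if_pos h0]
  exact Nat.choose_eq_zero_of_lt (by omega)

lemma ichoose_symm (m : ℕ) (j : ℤ) : ichoose m j = ichoose m ((m : ℤ) - j) := by
  rcases lt_or_ge j 0 with h | h
  · rw [ichoose_neg h, ichoose_of_gt (by omega)]
  rcases le_or_gt j m with h2 | h2
  · simp only [ichoose, if_pos h, if_pos (by omega : (0:ℤ) ≤ (m:ℤ) - j)]
    have : ((m : ℤ) - j).toNat = m - j.toNat := by omega
    rw [this, Nat.choose_symm (by omega)]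
  · rw [ichoose_of_gt h2, ichoose_neg (by omega)]

lemma ichoose_pascal (m : ℕ) (j : ℤ) :
    ichoose (m + 1) j = ichoose m j + ichoose m (j - 1) := by
  rcases lt_or_ge j 0 with h | h
  · rw [ichoose_neg h, ichoose_neg h, ichoose_neg (by omega)]
  rcases eq_or_lt_of_le h with h0 | h0
  · rw [← h0]; simp [ichoose, ichoose_neg (by omega : (0:ℤ) - 1 < 0)]
  · simp only [ichoose, if_pos h, if_pos (by omega : (0:ℤ) ≤ j - 1)]
    have h1 : j.toNat = (j - 1).toNat + 1 := by omega
    rw [h1, Nat.choose_succ_succ']; omega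

noncomputable def fq (n : ℕ) (k : ℤ) : ℚ :=
  (ichoose (2 * n) ((n : ℤ) - k + 1) : ℚ) - (ichoose (2 * n) ((n : ℤ) - k) : ℚ)

noncomputable def gq (n : ℕ) (h : ℤ) : ℚ :=
  (ichoose (2 * n - 2) ((n : ℤ) - 1 - h) : ℚ) - (ichoose (2 * n - 2) ((n : ℤ) - 3 - h) : ℚ)

lemma gq_one (h : ℤ) (hh : -1 ≤ h) : gq 1 h = if h = 0 then 1 else 0 := by
  simp only [gq]
  norm_num
  rcases lt_trichotomy h 0 with h0 | h0 | h0
  · rw [ichoose_of_gt (by omega), ichoose_neg (by omega), if_neg (by omega)]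
    norm_num
  · subst h0; simp [ichoose, ichoose_neg (by norm_num : (1:ℤ) - 3 - 0 < 0)]
  · rw [if_neg (by omega), ichoose_neg (by omega), ichoose_neg (by omega)]
    norm_num

lemma identA (n : ℕ) (hn : 1 ≤ n) (h : ℤ) :
    fq n (h + 1) + fq n (h + 2) = gq (n + 1) h := by
  simp only [fq, gq]
  have hm : 2 * (n + 1) - 2 = 2 * n := by omega
  rw [hm]
  push_cast
  have e1 : (n:ℤ) - (h + 1) + 1 = n - h := by ring
  have e2 : (n:ℤ) - (h + 1) = n - h - 1 := by ring
  have e3 : (n:ℤ) - (h + 2) + 1 = n - h - 1 := by ring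
  have e4 : (n:ℤ) - (h + 2) = n - h - 2 := by ring
  have e5 : ((n:ℤ) + 1) - 1 - h = n - h := by ring
  have e6 : ((n:ℤ) + 1) - 3 - h = n - h - 2 := by ring
  rw [e1, e2, e3, e4, e5, e6]
  ring

lemma identB (n : ℕ) (hn : 1 ≤ n) (k : ℤ) :
    gq n (k - 1) + gq n (k - 2) = fq n k := by
  simp only [fq, gq]
  have hm : 2 * n = (2 * n - 2) + 1 + 1 := by omega
  rw [hm]
  simp only [ichoose_pascal]
  push_cast
  have e1 : (n:ℤ) - 1 - (k - 1) = n - k := by ring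
  have e2 : (n:ℤ) - 3 - (k - 1) = n - k - 2 := by ring
  have e3 : (n:ℤ) - 1 - (k - 2) = n - k + 1 := by ring
  have e4 : (n:ℤ) - 3 - (k - 2) = n - k - 1 := by ring
  have e5 : (n:ℤ) - k + 1 - 1 = n - k := by ring
  have e6 : (n:ℤ) - k + 1 - 1 - 1 = n - k - 1 := by ring
  have e7 : (n:ℤ) - k - 1 - 1 = n - k - 2 := by ring
  rw [e6, e5, e7, e1, e2, e3, e4]
  ring

lemma identC (n k : ℕ) (hn : 1 ≤ n) (hk : 1 ≤ k) :
    fq n k = ((2 * k - 1 : ℚ) / (n + k)) * (ichoose (2 * n) ((n : ℤ) - k + 1) : ℚ) := by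
  have hnk : (0:ℚ) < (n:ℚ) + k := by positivity
  rcases lt_trichotomy ((n:ℤ) - k + 1) 0 with hj | hj | hj
  · rw [fq, ichoose_neg hj, ichoose_neg (by omega)]
    norm_num
  · rw [fq, hj, ichoose_neg (show (n:ℤ) - (k:ℤ) < 0 by omega)]
    have hk' : k = n + 1 := by omega
    subst hk'
    simp only [ichoose, if_pos le_rfl, Int.toNat_zero, Nat.choose_zero_right]
    push_cast
    field_simp
    ring
  · -- j ≥ 1
    set j : ℕ := ((n:ℤ) - k + 1).toNat with hjdef
    have hj1 : 1 ≤ j := by omega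
    have hjn : (j : ℤ) = (n:ℤ) - k + 1 := by omega
    have hcast : ((n:ℤ) - k + 1) = (j:ℤ) := hjn.symm
    have hic1 : ichoose (2*n) ((n:ℤ) - k + 1) = (2*n).choose j := by
      simp [ichoose, if_pos (by omega : (0:ℤ) ≤ (n:ℤ) - k + 1), hjdef]
    have hic0 : ichoose (2*n) ((n:ℤ) - k) = (2*n).choose (j - 1) := by
      simp only [ichoose, if_pos (by omega : (0:ℤ) ≤ (n:ℤ) - k)]
      congr 1; omega
    have key : (2*n).choose (j - 1 + 1) * (j - 1 + 1) = (2*n).choose (j-1) * (2*n - (j-1)) :=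
      Nat.choose_succ_right_eq (2*n) (j-1)
    have hj' : j - 1 + 1 = j := by omega
    rw [hj'] at key
    have h2n : 2*n - (j-1) = n + k := by omega
    rw [h2n] at key
    have keyQ : ((2*n).choose j : ℚ) * j = ((2*n).choose (j-1) : ℚ) * (n + k) := by
      exact_mod_cast congrArg (Nat.cast : ℕ → ℚ) key
    have hC0 : ((2*n).choose (j-1) : ℚ) = ((2*n).choose j : ℚ) * j / (n + k) := by
      field_simp; linarith [keyQ]
    rw [fq, hic1, hic0, hC0]
    have hjq : (j : ℚ) = (n : ℚ) - k + 1 := by exact_mod_cast hjn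
    rw [hjq]
    field_simp
    ring

-- ===== Combinatorial side =====

lemma knight_mem_iff {s : ℤ × ℤ} :
    s ∈ KnightSteps ↔ s = (2,1) ∨ s = (2,-1) ∨ s = (1,2) ∨ s = (1,-2) := by
  simp [KnightSteps]

lemma step_up {s : ℤ × ℤ} (hs : s ∈ KnightSteps) (h : 0 < s.2) :
    s = (2,1) ∨ s = (1,2) := by
  rcases knight_mem_iff.mp hs with h1 | h1 | h1 | h1 <;> subst h1 <;> simp_all <;> omega

lemma step_down {s : ℤ × ℤ} (hs : s ∈ KnightSteps) (h : s.2 < 0) :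
    s = (2,-1) ∨ s = (1,-2) := by
  rcases knight_mem_iff.mp hs with h1 | h1 | h1 | h1 <;> subst h1 <;> simp_all <;> omega

lemma pathHeight_append (q : List (ℤ × ℤ)) (s : ℤ × ℤ) :
    pathHeight (q ++ [s]) = pathHeight q + s.2 := by
  simp [pathHeight]

lemma nonneg_append (q : List (ℤ × ℤ)) (s : ℤ × ℤ) :
    NonnegHeights (q ++ [s]) ↔ NonnegHeights q ∧ 0 ≤ pathHeight (q ++ [s]) := by
  constructor
  · intro H
    refine ⟨fun i => ?_, ?_⟩
    · rcases le_or_gt i q.length with h | h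
      · have := H i; rwa [List.take_append_of_le_length h] at this
      · have := H q.length
        rw [List.take_append_of_le_length le_rfl, List.take_of_length_le le_rfl] at this
        rw [List.take_of_length_le h.le]
        exact this
    · have := H (q.length + 1)
      rwa [List.take_of_length_le (by simp)] at this
  · rintro ⟨H, hlast⟩ i
    rcases le_or_gt i q.length with h | h
    · rw [List.take_append_of_le_length h]; exact H i
    · rw [List.take_of_length_le (by simp; omega)]; exact hlast

/-- Paths with steps in `KnightSteps` of a fixed length form a finite set. -/
lemma finite_paths (L : ℕ) :
    {p : List (ℤ × ℤ) | (∀ s ∈ p, s ∈ KnightSteps) ∧ p.length = L}.Finite := by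
  induction L with
  | zero =>
      apply Set.Finite.subset (Set.finite_singleton ([] : List (ℤ × ℤ)))
      rintro p ⟨-, hl⟩
      simp only [List.length_eq_zero_iff] at hl
      simp [hl]
  | succ L ih =>
      have hK : KnightSteps.Finite := by
        unfold KnightSteps
        exact (((Set.finite_singleton _).insert _).insert _).insert _
      apply Set.Finite.subset ((hK.prod ih).image (fun q : (ℤ × ℤ) × List (ℤ × ℤ) => q.1 :: q.2))
      rintro p ⟨hs, hl⟩
      cases p with
      | nil => simp at hl
      | cons a q =>
          exact ⟨(a, q), ⟨hs a (List.mem_cons_self),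
            fun s h => hs s (List.mem_cons_of_mem _ h), by simpa using hl⟩, rfl⟩

def FSet (n : ℕ) (k : ℤ) : Set (List (ℤ × ℤ)) :=
  {p | IsPartialZigzag p ∧ p.length = 2 * n - 1 ∧ pathHeight p = k ∧ EndsWithUp p}

def GSet (n : ℕ) (h : ℤ) : Set (List (ℤ × ℤ)) :=
  {p | IsPartialZigzag p ∧ p.length = 2 * n - 2 ∧ pathHeight p = h ∧ (p = [] ∨ EndsWithDown p)}

lemma FSet_finite (n : ℕ) (k : ℤ) : (FSet n k).Finite := by
  apply (finite_paths (2 * n - 1)).subset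
  rintro p ⟨⟨⟨h1, -⟩, -⟩, h2, -⟩
  exact ⟨h1, h2⟩

lemma GSet_finite (n : ℕ) (h : ℤ) : (GSet n h).Finite := by
  apply (finite_paths (2 * n - 2)).subset
  rintro p ⟨⟨⟨h1, -⟩, -⟩, h2, -⟩
  exact ⟨h1, h2⟩

lemma GSet_neg (n : ℕ) {h : ℤ} (hh : h < 0) : GSet n h = ∅ := by
  ext p
  simp only [GSet, Set.mem_setOf_eq, Set.mem_empty_iff_false, iff_false]
  rintro ⟨⟨⟨-, hnn⟩, -⟩, -, hht, -⟩
  have := hnn p.length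
  rw [List.take_of_length_le le_rfl] at this
  rw [pathHeight] at hht
  omega

lemma GSet_one (h : ℤ) : GSet 1 h = if h = 0 then {[]} else ∅ := by
  ext p
  constructor
  · rintro ⟨-, hlen, hht, -⟩
    have hp : p = [] := by
      rw [← List.length_eq_zero_iff]; simpa using hlen
    subst hp
    have h0 : h = 0 := by simpa [pathHeight] using hht.symm
    simp [h0]
  · intro hp
    split_ifs at hp with h0
    · rw [Set.mem_singleton_iff] at hp
      subst hp; subst h0
      refine ⟨⟨⟨by simp, fun i => by simp⟩, List.isChain_nil⟩, by simp, by simp [pathHeight], Or.inl rfl⟩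
    · exact absurd hp (Set.notMem_empty p)

/-- Appending an up-step to a path in `GSet`. -/
lemma F_eq (n : ℕ) (hn : 1 ≤ n) (k : ℤ) (hk : 1 ≤ k) :
    FSet n k = (fun q => q ++ [((2:ℤ), (1:ℤ))]) '' GSet n (k - 1)
      ∪ (fun q => q ++ [((1:ℤ), (2:ℤ))]) '' GSet n (k - 2) := by
  ext p
  constructor
  · rintro ⟨⟨⟨hsteps, hnn⟩, hzig⟩, hlen, hht, ⟨s, hlast, hpos⟩⟩
    have hne : p ≠ [] := by rintro rfl; simp at hlast
    have hs' : p.getLast hne = s := by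
      rw [List.getLast?_eq_getLast hne, Option.some_inj] at hlast; exact hlast
    have hdecomp : p.dropLast ++ [s] = p := by
      rw [← hs']; exact List.dropLast_append_getLast hne
    set q := p.dropLast with hqdef
    have hsK : s ∈ KnightSteps := hsteps s (by
      rw [← hdecomp]; exact List.mem_append_right _ (List.mem_singleton_self s))
    have hqzig : List.Chain' (fun a b => a.2 * b.2 < 0) q ∧
        ∀ l ∈ q.getLast?, l.2 * s.2 < 0 := by
      have hz : List.Chain' (fun a b => a.2 * b.2 < 0) (q ++ [s]) := by
        rw [hdecomp]; exact hzig
      unfold List.Chain' at hz; rw [List.isChain_append] at hz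
      exact ⟨hz.1, fun l hl => hz.2.2 l hl s rfl⟩
    have hqnn : NonnegHeights q := by
      have := hnn; rw [← hdecomp] at this
      exact ((nonneg_append q s).mp this).1
    have hqsteps : ∀ t ∈ q, t ∈ KnightSteps := fun t ht => hsteps t (by
      rw [← hdecomp]; exact List.mem_append_left _ ht)
    have hqlen : q.length = 2 * n - 2 := by
      rw [hqdef, List.length_dropLast, hlen]
      omega
    have hqht : pathHeight q = k - s.2 := by
      have := hht; rw [← hdecomp, pathHeight_append] at this; omega
    have hqend : q = [] ∨ EndsWithDown q := by
      rcases eq_or_ne q [] with h | h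
      · exact Or.inl h
      · refine Or.inr ⟨q.getLast h, List.getLast?_eq_getLast h, ?_⟩
        have hrel := hqzig.2 _ (List.getLast?_eq_getLast h)
        rcases mul_neg_iff.mp hrel with ⟨-, h2⟩ | ⟨h2, -⟩
        · omega
        · exact h2
    have hqmem : q ∈ GSet n (k - s.2) :=
      ⟨⟨⟨hqsteps, hqnn⟩, hqzig.1⟩, hqlen, hqht, hqend⟩
    rcases step_up hsK hpos with rfl | rfl
    · left; exact ⟨q, by simpa using hqmem, hdecomp⟩
    · right; exact ⟨q, by simpa using hqmem, hdecomp⟩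
  · rintro (⟨q, ⟨⟨⟨hsteps, hnn⟩, hzig⟩, hlen, hht, hend⟩, rfl⟩ |
            ⟨q, ⟨⟨⟨hsteps, hnn⟩, hzig⟩, hlen, hht, hend⟩, rfl⟩) <;>
    · beta_reduce
      refine ⟨⟨⟨?_, ?_⟩, ?_⟩, ?_, ?_, ?_⟩
      · intro t ht
        rcases List.mem_append.mp ht with h | h
        · exact hsteps t h
        · rw [List.mem_singleton] at h; subst h; simp [KnightSteps]
      · refine (nonneg_append _ _).mpr ⟨hnn, ?_⟩
        rw [pathHeight_append, hht]; omega
      · unfold IsZigzag List.Chain'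
        rw [List.isChain_append]
        refine ⟨hzig, List.isChain_singleton _, fun l hl y hy => ?_⟩
        simp only [List.head?_cons, Option.mem_def, Option.some_inj] at hy
        subst hy
        rcases hend with rfl | ⟨d, hd, hdneg⟩
        · simp at hl
        · rw [Option.mem_def, hd, Option.some_inj] at hl
          subst hl
          simp only
          nlinarith
      · simp only [List.length_append, List.length_singleton, hlen]; omega
      · rw [pathHeight_append, hht]; ring
      · exact ⟨_, List.getLast?_concat, by norm_num⟩

/-- Removing the last down-step of a path in `GSet`. -/
lemma G_eq (n : ℕ) (hn : 2 ≤ n) (h : ℤ) (hh : 0 ≤ h) :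
    GSet n h = (fun q => q ++ [((2:ℤ), (-1:ℤ))]) '' FSet (n - 1) (h + 1)
      ∪ (fun q => q ++ [((1:ℤ), (-2:ℤ))]) '' FSet (n - 1) (h + 2) := by
  ext p
  constructor
  · rintro ⟨⟨⟨hsteps, hnn⟩, hzig⟩, hlen, hht, hend⟩
    have hne : p ≠ [] := by
      rintro rfl; simp at hlen; omega
    rcases hend with h' | ⟨s, hlast, hneg⟩
    · exact absurd h' hne
    have hs' : p.getLast hne = s := by
      rw [List.getLast?_eq_getLast hne, Option.some_inj] at hlast; exact hlast
    have hdecomp : p.dropLast ++ [s] = p := by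
      rw [← hs']; exact List.dropLast_append_getLast hne
    set q := p.dropLast with hqdef
    have hsK : s ∈ KnightSteps := hsteps s (by
      rw [← hdecomp]; exact List.mem_append_right _ (List.mem_singleton_self s))
    have hqzig : List.Chain' (fun a b => a.2 * b.2 < 0) q ∧
        ∀ l ∈ q.getLast?, l.2 * s.2 < 0 := by
      have hz : List.Chain' (fun a b => a.2 * b.2 < 0) (q ++ [s]) := by
        rw [hdecomp]; exact hzig
      unfold List.Chain' at hz; rw [List.isChain_append] at hz
      exact ⟨hz.1, fun l hl => hz.2.2 l hl s rfl⟩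
    have hqnn : NonnegHeights q := by
      have := hnn; rw [← hdecomp] at this
      exact ((nonneg_append q s).mp this).1
    have hqsteps : ∀ t ∈ q, t ∈ KnightSteps := fun t ht => hsteps t (by
      rw [← hdecomp]; exact List.mem_append_left _ ht)
    have hqlen : q.length = 2 * (n - 1) - 1 := by
      rw [hqdef, List.length_dropLast, hlen]; omega
    have hqht : pathHeight q = h - s.2 := by
      have := hht; rw [← hdecomp, pathHeight_append] at this; omega
    have hqne : q ≠ [] := by
      intro h'
      have : q.length = 0 := by rw [h']; rfl
      omega
    have hqend : EndsWithUp q := by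
      refine ⟨q.getLast hqne, List.getLast?_eq_getLast hqne, ?_⟩
      have hrel := hqzig.2 _ (List.getLast?_eq_getLast hqne)
      rcases mul_neg_iff.mp hrel with ⟨h2, -⟩ | ⟨-, h2⟩
      · exact h2
      · omega
    have hqmem : q ∈ FSet (n - 1) (h - s.2) :=
      ⟨⟨⟨hqsteps, hqnn⟩, hqzig.1⟩, hqlen, hqht, hqend⟩
    rcases step_down hsK hneg with rfl | rfl
    · left; exact ⟨q, by simpa using hqmem, hdecomp⟩
    · right; exact ⟨q, by simpa using hqmem, hdecomp⟩
  · rintro (⟨q, ⟨⟨⟨hsteps, hnn⟩, hzig⟩, hlen, hht, ⟨u, hu, hupos⟩⟩, rfl⟩ |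
            ⟨q, ⟨⟨⟨hsteps, hnn⟩, hzig⟩, hlen, hht, ⟨u, hu, hupos⟩⟩, rfl⟩) <;>
    · beta_reduce
      refine ⟨⟨⟨?_, ?_⟩, ?_⟩, ?_, ?_, Or.inr ⟨_, List.getLast?_concat, by norm_num⟩⟩
      · intro t ht
        rcases List.mem_append.mp ht with h' | h'
        · exact hsteps t h'
        · rw [List.mem_singleton] at h'; subst h'; simp [KnightSteps]
      · refine (nonneg_append _ _).mpr ⟨hnn, ?_⟩
        rw [pathHeight_append, hht]; omega
      · unfold IsZigzag List.Chain'
        rw [List.isChain_append]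
        refine ⟨hzig, List.isChain_singleton _, fun l hl y hy => ?_⟩
        simp only [List.head?_cons, Option.mem_def, Option.some_inj] at hy
        subst hy
        rw [Option.mem_def, hu, Option.some_inj] at hl
        subst hl
        simp only
        nlinarith
      · simp only [List.length_append, List.length_singleton, hlen]; omega
      · rw [pathHeight_append, hht]; ring

-- ===== Cardinalities =====

lemma concat_injective (s : ℤ × ℤ) : Function.Injective (fun q : List (ℤ × ℤ) => q ++ [s]) :=
  fun a b h => List.append_cancel_right h

lemma cardF (n : ℕ) (hn : 1 ≤ n) (k : ℤ) (hk : 1 ≤ k) :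
    (FSet n k).ncard = (GSet n (k - 1)).ncard + (GSet n (k - 2)).ncard := by
  rw [F_eq n hn k hk, Set.ncard_union_eq ?disj
      ((GSet_finite _ _).image _) ((GSet_finite _ _).image _),
    Set.ncard_image_of_injective _ (concat_injective _),
    Set.ncard_image_of_injective _ (concat_injective _)]
  case disj =>
    rw [Set.disjoint_left]
    rintro p ⟨q, -, rfl⟩ ⟨q', -, habs⟩
    beta_reduce at habs
    have h1 := List.getLast?_concat (l := q) (a := ((2:ℤ),(1:ℤ)))
    rw [← habs, List.getLast?_concat] at h1
    simp at h1

lemma cardG (n : ℕ) (hn : 2 ≤ n) (h : ℤ) (hh : 0 ≤ h) :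
    (GSet n h).ncard = (FSet (n - 1) (h + 1)).ncard + (FSet (n - 1) (h + 2)).ncard := by
  rw [G_eq n hn h hh, Set.ncard_union_eq ?disj
      ((FSet_finite _ _).image _) ((FSet_finite _ _).image _),
    Set.ncard_image_of_injective _ (concat_injective _),
    Set.ncard_image_of_injective _ (concat_injective _)]
  case disj =>
    rw [Set.disjoint_left]
    rintro p ⟨q, -, rfl⟩ ⟨q', -, habs⟩
    beta_reduce at habs
    have h1 := List.getLast?_concat (l := q) (a := ((2:ℤ),(-1:ℤ)))
    rw [← habs, List.getLast?_concat] at h1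
    simp at h1

lemma gq_neg_one (n : ℕ) (hn : 1 ≤ n) : gq n (-1) = 0 := by
  simp only [gq]
  rw [ichoose_symm (2 * n - 2) ((n : ℤ) - 1 - (-1))]
  have e : ((2 * n - 2 : ℕ) : ℤ) - ((n : ℤ) - 1 - (-1)) = (n : ℤ) - 3 - (-1) := by omega
  rw [e, sub_self]

lemma Gq_all : ∀ n : ℕ, 1 ≤ n → ∀ h : ℤ, -1 ≤ h → ((GSet n h).ncard : ℚ) = gq n h := by
  intro n hn
  induction n, hn using Nat.le_induction with
  | base =>
      intro h hh
      rw [GSet_one, gq_one h hh]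
      split_ifs
      · simp
      · simp
  | succ n hn ih =>
      have Fq_n : ∀ k : ℤ, 1 ≤ k → ((FSet n k).ncard : ℚ) = fq n k := by
        intro k hk
        rw [cardF n hn k hk, Nat.cast_add, ih (k - 1) (by omega), ih (k - 2) (by omega),
          identB n hn k]
      intro h hh
      rcases eq_or_lt_of_le hh with h0 | h0
      · rw [← h0, GSet_neg _ (by norm_num), gq_neg_one (n + 1) (by omega)]
        simp
      · have hh0 : 0 ≤ h := by omega
        have := cardG (n + 1) (by omega) h hh0
        simp only [Nat.add_sub_cancel] at this
        rw [this, Nat.cast_add, Fq_n (h + 1) (by omega), Fq_n (h + 2) (by omega),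
          identA n hn h]

lemma Fq_all (n : ℕ) (hn : 1 ≤ n) (k : ℤ) (hk : 1 ≤ k) :
    ((FSet n k).ncard : ℚ) = fq n k := by
  rw [cardF n hn k hk, Nat.cast_add, Gq_all n hn (k - 1) (by omega),
    Gq_all n hn (k - 2) (by omega), identB n hn k]

/-- partial zigzag knight's paths of length 2n−1 ending at height k
with an up last step are counted by ((2k−1)/(n+k))·binom(2n, n−k+1). -/
theorem stmt3 (n k : ℕ) (hn : 1 ≤ n) (hk : 1 ≤ k) :
    (Nat.card {p : List (ℤ × ℤ) //
        IsPartialZigzag p ∧ p.length = 2 * n - 1 ∧ pathHeight p = k ∧ EndsWithUp p} : ℚ)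
      = ((2 * k - 1 : ℚ) / (n + k)) * (ichoose (2 * n) ((n : ℤ) - k + 1) : ℚ) := by
  have h1 : (Nat.card {p : List (ℤ × ℤ) //
      IsPartialZigzag p ∧ p.length = 2 * n - 1 ∧ pathHeight p = k ∧ EndsWithUp p})
      = (FSet n (k : ℤ)).ncard := Nat.card_coe_set_eq (FSet n (k : ℤ))
  rw [h1, Fq_all n hn (k : ℤ) (by exact_mod_cast hk), identC n k hn hk]
end

section
/- For every k ≥ 1, there is no partial zigzag knight's path of even length ending at height k whose last step is an up-step, and no partial zigzag knight's path of odd length ending at height k whose last step is a down-step. -/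
open List

lemma sign_alt (p : List (ℤ × ℤ)) (h : IsPartialZigzag p) :
    ∀ i (hi : i < p.length),
      (Even i → 0 < (p.get ⟨i, hi⟩).2) ∧ (¬ Even i → (p.get ⟨i, hi⟩).2 < 0) := by
  obtain ⟨⟨hsteps, hnn⟩, hzz⟩ := h
  intro i
  induction i with
  | zero =>
    intro hi
    refine ⟨fun _ => ?_, fun h2 => absurd (Even.zero) h2⟩
    obtain ⟨a, l, rfl⟩ : ∃ a l, p = a :: l := by
      cases p with
      | nil => simp at hi
      | cons a l => exact ⟨a, l, rfl⟩
    have h1 := hnn 1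
    simp at h1 ⊢
    have := hsteps a (mem_cons_self)
    simp [KnightSteps] at this
    rcases this with h|h|h|h <;> simp [h] at h1 ⊢ <;> omega
  | succ n ih =>
    intro hi
    have hn : n < p.length := by omega
    have hchain : (p.get ⟨n, hn⟩).2 * (p.get ⟨n + 1, hi⟩).2 < 0 :=
      (List.isChain_iff_getElem.mp hzz) n (by omega)
    have := ih hn
    constructor
    · intro he
      have hno : ¬ Even n := by simpa [Nat.even_add_one] using he
      have := this.2 hno
      nlinarith [hchain]
    · intro ho
      have hye : Even n := by simpa [Nat.even_add_one] using ho
      have := this.1 hye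
      nlinarith [hchain]

/-- for k ≥ 1, no partial zigzag knight's path of even length ends at
height k with an up last step, and none of odd length ends at height k with a down
last step. -/
theorem stmt5 (k : ℕ) (hk : 1 ≤ k) :
    (¬ ∃ p : List (ℤ × ℤ),
        IsPartialZigzag p ∧ pathHeight p = k ∧ Even p.length ∧ EndsWithUp p) ∧
    (¬ ∃ p : List (ℤ × ℤ),
        IsPartialZigzag p ∧ pathHeight p = k ∧ Odd p.length ∧ EndsWithDown p) := by
  constructor
  · rintro ⟨p, hpz, -, hev, s, hlast, hs⟩
    have hne : p ≠ [] := by rintro rfl; simp at hlast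
    have hlen : 0 < p.length := List.length_pos_iff.mpr hne
    have hget : p.get ⟨p.length - 1, by omega⟩ = s := by
      rw [List.get_eq_getElem, ← List.getLast_eq_getElem hne, ← Option.some_inj,
        ← List.getLast?_eq_getLast hne, hlast]
    have := (sign_alt p hpz (p.length - 1) (by omega)).2 (by
      simpa [Nat.even_sub hlen] using hev)
    rw [hget] at this; omega
  · rintro ⟨p, hpz, -, hodd, s, hlast, hs⟩
    have hne : p ≠ [] := by rintro rfl; simp at hlast
    have hlen : 0 < p.length := List.length_pos_iff.mpr hne
    have hget : p.get ⟨p.length - 1, by omega⟩ = s := by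
      rw [List.get_eq_getElem, ← List.getLast_eq_getElem hne, ← Option.some_inj,
        ← List.getLast?_eq_getLast hne, hlast]
    have := (sign_alt p hpz (p.length - 1) (by omega)).1 (by
      have := Nat.odd_iff.mp hodd
      simp [Nat.even_sub hlen, Nat.even_iff, this])
    rw [hget] at this; omega
end
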